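/- In the shared-data setting, the symmetric algorithm profile (A, A) is a Nash equilibrium of the two-platform game if and only if A is a symmetric pure strategy Nash equilibrium of the N-player game G in which each player chooses an algorithm in 𝒜 and receives utility U(A_i; A_{-i}) depending on the full algorithm profile. -/

import Mathlib

open Finset

/-- The multiset of algorithms played by the users other than `i`, when user `k`'s
algorithm is `q k`. -/
def others {N : ℕ} {𝒜 : Type*} (q : Fin N → 𝒜) (i : Fin N) : Multiset 𝒜 :=
  (univ.erase i).val.map q


lemma card_others {N : ℕ} {𝒜 : Type*} (q : Fin N → 𝒜) (i : Fin N) :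
    Multiset.card (others q i) = N - 1 := by
  simp [others, Finset.card_erase_of_mem]

lemma others_const {N : ℕ} {𝒜 : Type*} (a : 𝒜) (i : Fin N) :
    others (fun _ => a) i = Multiset.replicate (N - 1) a := by
  rw [show (fun _ : Fin N => a) = Function.const _ a from rfl]
  rw [others, Multiset.map_const]
  simp [Finset.card_erase_of_mem]

lemma others_congr {N : ℕ} {𝒜 : Type*} {q q' : Fin N → 𝒜} (i : Fin N)
    (h : ∀ j, j ≠ i → q j = q' j) : others q i = others q' i := by
  refine Multiset.map_congr rfl ?_
  intro j hj
  exact h j (Finset.mem_erase.mp (Finset.mem_val.mp hj)).1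

lemma others_eq {N : ℕ} {𝒜 : Type*} (A1 A2 : 𝒜) (p : Fin N → Bool) (i : Fin N) :
    others (fun k => if p k then A2 else A1) i
      = Multiset.replicate (((univ.erase i).filter (fun j => p j = false)).card) A1
        + Multiset.replicate ((N - 1) - ((univ.erase i).filter (fun j => p j = false)).card) A2 := by
  classical
  set s : Multiset (Fin N) := (univ.erase i).val with hs
  have hsplit : s.filter (fun j => p j = false) + s.filter (fun j => ¬ p j = false) = s :=
    Multiset.filter_add_not _ s
  have hcard1 : ((univ.erase i).filter (fun j => p j = false)).card
      = Multiset.card (s.filter (fun j => p j = false)) := by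
    rw [Finset.card, Finset.filter_val]
  have hcards : Multiset.card s = N - 1 := by
    simp [hs, Finset.card_erase_of_mem]
  have hcard2 : Multiset.card (s.filter (fun j => ¬ p j = false))
      = (N - 1) - ((univ.erase i).filter (fun j => p j = false)).card := by
    have := congrArg Multiset.card hsplit
    rw [Multiset.card_add, hcards] at this
    omega
  calc others (fun k => if p k then A2 else A1) i
      = (s.filter (fun j => p j = false)).map (fun k => if p k then A2 else A1)
        + (s.filter (fun j => ¬ p j = false)).map (fun k => if p k then A2 else A1) := by
        rw [others]
        conv_lhs => rw [show (univ.erase i).val = s from rfl, ← hsplit]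
        rw [Multiset.map_add]
    _ = _ := by
        congr 1
        · rw [show ((s.filter (fun j => p j = false)).map (fun k => if p k then A2 else A1))
              = (s.filter (fun j => p j = false)).map (fun _ => A1) from
            Multiset.map_congr rfl (fun j hj => by
              have := Multiset.of_mem_filter hj
              simp [this])]
          rw [Multiset.map_const', hcard1]
        · rw [show ((s.filter (fun j => ¬ p j = false)).map (fun k => if p k then A2 else A1))
              = (s.filter (fun j => ¬ p j = false)).map (fun _ => A2) from
            Multiset.map_congr rfl (fun j hj => by
              have := Multiset.of_mem_filter hj
              simp at this
              simp [this])]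
          rw [Multiset.map_const', hcard2]

/-- Shared-data utility of user `i` when the platforms run `A1`, `A2` and users choose
platforms according to `p` (`false` = platform 1): the utility depends only on the user's
own effective algorithm and the multiset of the other users' effective algorithms. -/
def utilShared {N : ℕ} {𝒜 : Type*} (U : 𝒜 → Multiset 𝒜 → ℝ)
    (A1 A2 : 𝒜) (p : Fin N → Bool) (i : Fin N) : ℝ :=
  U (if p i then A2 else A1) (others (fun k => if p k then A2 else A1) i)

/-- Pure user Nash equilibrium in the shared-data platform-choice game. -/
def userNashShared {N : ℕ} {𝒜 : Type*} (U : 𝒜 → Multiset 𝒜 → ℝ)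
    (A1 A2 : 𝒜) (p : Fin N → Bool) : Prop :=
  ∀ i, utilShared U A1 A2 (Function.update p i (!(p i))) i ≤ utilShared U A1 A2 p i


lemma utilShared_eq {N : ℕ} {𝒜 : Type*} (U : 𝒜 → Multiset 𝒜 → ℝ) (A1 A2 : 𝒜)
    (p : Fin N → Bool) (i : Fin N) :
    utilShared U A1 A2 p i
      = U (if p i then A2 else A1)
          (Multiset.replicate (((univ.erase i).filter (fun j => p j = false)).card) A1
            + Multiset.replicate
                ((N - 1) - ((univ.erase i).filter (fun j => p j = false)).card) A2) := by
  rw [utilShared, others_eq]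

lemma exists_userEq (N : ℕ) {𝒜 : Type*} (U : 𝒜 → Multiset 𝒜 → ℝ) (A1 A2 : 𝒜) :
    ∃ p : Fin N → Bool, userNashShared U A1 A2 p := by
  classical
  let c : ℕ → Multiset 𝒜 := fun m =>
    Multiset.replicate m A1 + Multiset.replicate ((N - 1) - m) A2
  let F : ℕ → ℝ := fun m => U A1 (c m) - U A2 (c m)
  let kk : (Fin N → Bool) → ℕ := fun p => (univ.filter (fun i => p i = false)).card
  let Φ : (Fin N → Bool) → ℝ := fun p => ∑ j ∈ Finset.range (kk p), F j
  obtain ⟨p, hp⟩ := Finite.exists_max Φ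
  refine ⟨p, fun i => ?_⟩
  set m : ℕ := ((univ.erase i).filter (fun j => p j = false)).card with hm
  set p' : Fin N → Bool := Function.update p i (!(p i)) with hp'
  have hmp' : ((univ.erase i).filter (fun j => p' j = false)).card = m := by
    rw [hm]
    apply congrArg Finset.card
    apply Finset.filter_congr
    intro j hj
    have hji : j ≠ i := (Finset.mem_erase.mp hj).1
    rw [hp', Function.update_of_ne hji]
  have hkk : ∀ q : Fin N → Bool, kk q
      = ((univ.erase i).filter (fun j => q j = false)).card
        + (if q i = false then 1 else 0) := by
    intro q
    show (univ.filter (fun j => q j = false)).card = _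
    conv_lhs => rw [← Finset.insert_erase (Finset.mem_univ i)]
    rw [Finset.filter_insert]
    by_cases h : q i = false
    · rw [if_pos h, if_pos h, Finset.card_insert_of_notMem (by simp)]
    · rw [if_neg h, if_neg h, add_zero]
  have hpi' : p' i = !(p i) := by rw [hp', Function.update_self]
  have hui : utilShared U A1 A2 p i
      = (if p i then U A2 (c m) else U A1 (c m)) := by
    rw [utilShared_eq, ← hm]
    cases hb : p i <;> simp [c]
  have hui' : utilShared U A1 A2 p' i
      = (if p i then U A1 (c m) else U A2 (c m)) := by
    rw [utilShared_eq, hmp', hpi']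
    cases hb : p i <;> simp [c]
  cases hb : p i with
  | true =>
    have hkkp : kk p = m := by rw [hkk p, hb]; simp [hm]
    have hkkp' : kk p' = m + 1 := by rw [hkk p', hmp', hpi', hb]; simp
    have hsum : Φ p' = Φ p + F m := by
      show ∑ j ∈ Finset.range (kk p'), F j = (∑ j ∈ Finset.range (kk p), F j) + F m
      rw [hkkp, hkkp', Finset.sum_range_succ]
    have hFm : F m ≤ 0 := by have := hp p'; rw [hsum] at this; linarith
    rw [show utilShared U A1 A2 (Function.update p i (!(p i))) i
          = utilShared U A1 A2 p' i from rfl, hui, hui', hb, if_pos rfl, if_pos rfl]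
    have : U A1 (c m) - U A2 (c m) ≤ 0 := hFm
    linarith
  | false =>
    have hkkp : kk p = m + 1 := by rw [hkk p, hb]; simp [hm]
    have hkkp' : kk p' = m := by rw [hkk p', hmp', hpi', hb]; simp
    have hsum : Φ p = Φ p' + F m := by
      show ∑ j ∈ Finset.range (kk p), F j = (∑ j ∈ Finset.range (kk p'), F j) + F m
      rw [hkkp, hkkp', Finset.sum_range_succ]
    have hFm : 0 ≤ F m := by have := hp p'; rw [hsum] at this; linarith
    rw [show utilShared U A1 A2 (Function.update p i (!(p i))) i
          = utilShared U A1 A2 p' i from rfl, hui, hui', hb]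
    simp only [Bool.false_eq_true, if_false]
    have : 0 ≤ U A1 (c m) - U A2 (c m) := hFm
    linarith

lemma util_allTrue {N : ℕ} {𝒜 : Type*} (U : 𝒜 → Multiset 𝒜 → ℝ) (A1 A : 𝒜) (i : Fin N) :
    utilShared U A1 A (fun _ => true) i = U A (Multiset.replicate (N - 1) A) := by
  rw [utilShared]
  rw [show (fun k : Fin N => if (fun _ : Fin N => true) k = true then A else A1)
        = fun _ : Fin N => A from funext fun k => by simp]
  rw [others_const]
  simp

lemma util_allTrue_dev {N : ℕ} {𝒜 : Type*} (U : 𝒜 → Multiset 𝒜 → ℝ) (A1 A : 𝒜) (i : Fin N) :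
    utilShared U A1 A
        (Function.update (fun _ => true) i (!((fun _ : Fin N => true) i))) i
      = U A1 (Multiset.replicate (N - 1) A) := by
  rw [utilShared, Function.update_self]
  rw [others_congr i (fun j hj => by rw [Function.update_of_ne hj]) ]
  rw [show (fun k : Fin N => if (fun _ : Fin N => true) k = true then A else A1)
        = fun _ : Fin N => A from funext fun k => by simp]
  rw [others_const]
  simp

lemma util_allFalse {N : ℕ} {𝒜 : Type*} (U : 𝒜 → Multiset 𝒜 → ℝ) (A A2 : 𝒜) (i : Fin N) :
    utilShared U A A2 (fun _ => false) i = U A (Multiset.replicate (N - 1) A) := by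
  rw [utilShared]
  rw [show (fun k : Fin N => if (fun _ : Fin N => false) k = true then A2 else A)
        = fun _ : Fin N => A from funext fun k => by simp]
  rw [others_const]
  simp

lemma util_allFalse_dev {N : ℕ} {𝒜 : Type*} (U : 𝒜 → Multiset 𝒜 → ℝ) (A A2 : 𝒜) (i : Fin N) :
    utilShared U A A2
        (Function.update (fun _ => false) i (!((fun _ : Fin N => false) i))) i
      = U A2 (Multiset.replicate (N - 1) A) := by
  rw [utilShared, Function.update_self]
  rw [others_congr i (fun j hj => by rw [Function.update_of_ne hj]) ]
  rw [show (fun k : Fin N => if (fun _ : Fin N => false) k = true then A2 else A)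
        = fun _ : Fin N => A from funext fun k => by simp]
  rw [others_const]
  simp

/-- The set of pure user Nash equilibria. -/
def userEqShared (N : ℕ) {𝒜 : Type*} (U : 𝒜 → Multiset 𝒜 → ℝ) (A1 A2 : 𝒜) :
    Set (Fin N → Bool) :=
  {p | userNashShared U A1 A2 p}

/-- Platform 1's utility: minimum user count over pure user equilibria. -/
noncomputable def v1Shared (N : ℕ) {𝒜 : Type*} (U : 𝒜 → Multiset 𝒜 → ℝ) (A1 A2 : 𝒜) : ℕ :=
  sInf ((fun p => (univ.filter fun i => p i = false).card) '' userEqShared N U A1 A2)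

/-- Platform 2's utility: minimum user count over pure user equilibria. -/
noncomputable def v2Shared (N : ℕ) {𝒜 : Type*} (U : 𝒜 → Multiset 𝒜 → ℝ) (A1 A2 : 𝒜) : ℕ :=
  sInf ((fun p => (univ.filter fun i => p i = true).card) '' userEqShared N U A1 A2)

/-- `(A1, A2)` is a pure Nash equilibrium of the shared-data platform game. -/
def platformNashShared (N : ℕ) {𝒜 : Type*} (U : 𝒜 → Multiset 𝒜 → ℝ) (A1 A2 : 𝒜) : Prop :=
  (∀ A, v1Shared N U A A2 ≤ v1Shared N U A1 A2) ∧
    (∀ A, v2Shared N U A1 A ≤ v2Shared N U A1 A2)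

/-- `A` is a symmetric pure strategy Nash equilibrium of the `N`-player game `G`:
no player can improve by unilaterally deviating from the all-`A` profile. -/
def symEqG (N : ℕ) {𝒜 : Type*} (U : 𝒜 → Multiset 𝒜 → ℝ) (A : 𝒜) : Prop :=
  ∀ A', U A' (Multiset.replicate (N - 1) A) ≤ U A (Multiset.replicate (N - 1) A)

/-- in the shared-data setting, `(A, A)` is a platform Nash equilibrium iff
`A` is a symmetric pure strategy Nash equilibrium of the `N`-player game `G`. -/
theorem shared_platformNash_iff_symEq (N : ℕ) (hN : 1 ≤ N) {𝒜 : Type*}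
    (U : 𝒜 → Multiset 𝒜 → ℝ) (A : 𝒜) :
    platformNashShared N U A A ↔ symEqG N U A := by
  classical
  constructor
  · rintro ⟨h1, _⟩ A'
    -- the all-true profile is an equilibrium of the (A, A) game
    have heqAA : (fun _ : Fin N => true) ∈ userEqShared N U A A := by
      intro i
      rw [util_allTrue, util_allTrue_dev]
    have hv0 : v1Shared N U A A = 0 := by
      apply Nat.eq_zero_of_le_zero
      apply Nat.sInf_le
      exact ⟨_, heqAA, by simp⟩
    have hzero : v1Shared N U A' A = 0 := by
      have := h1 A'
      rw [hv0] at this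
      exact Nat.le_zero.mp this
    obtain ⟨p0, hp0⟩ := exists_userEq N U A' A
    have h0mem : 0 ∈ (fun p => (univ.filter fun i => p i = false).card) ''
        userEqShared N U A' A := by
      rcases Nat.sInf_eq_zero.mp hzero with h | h
      · exact h
      · exfalso
        have hmem : p0 ∈ userEqShared N U A' A := hp0
        have := Set.mem_image_of_mem
          (fun p : Fin N → Bool => (univ.filter fun i => p i = false).card) hmem
        rw [h] at this
        exact Set.notMem_empty _ this
    obtain ⟨q, hq, hq0⟩ := h0mem
    have hqt : q = fun _ => true := by
      funext j
      by_contra hj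
      have hjf : q j = false := by cases hqj : q j <;> simp_all
      have hmem : j ∈ univ.filter (fun i => q i = false) := by simp [hjf]
      have := Finset.card_pos.mpr ⟨j, hmem⟩
      simp only at hq0
      omega
    have hq' : userNashShared U A' A q := hq
    rw [hqt] at hq'
    have := hq' ⟨0, hN⟩
    rwa [util_allTrue, util_allTrue_dev] at this
  · intro hsym
    constructor
    · intro A'
      have heq : (fun _ : Fin N => true) ∈ userEqShared N U A' A := by
        intro i
        rw [util_allTrue, util_allTrue_dev]
        exact hsym A'
      have : v1Shared N U A' A = 0 := by
        apply Nat.eq_zero_of_le_zero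
        apply Nat.sInf_le
        exact ⟨_, heq, by simp⟩
      rw [this]
      exact Nat.zero_le _
    · intro A'
      have heq : (fun _ : Fin N => false) ∈ userEqShared N U A A' := by
        intro i
        rw [util_allFalse, util_allFalse_dev]
        exact hsym A'
      have : v2Shared N U A A' = 0 := by
        apply Nat.eq_zero_of_le_zero
        apply Nat.sInf_le
        exact ⟨_, heq, by simp⟩
      rw [this]
      exact Nat.zero_le _
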